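/- Let G be a finite connected graph and v a vertex such that {v} is a resolving set of G. Then G is a path graph and v is one of its endpoints (or G is a single vertex). -/

import Mathlib

open SimpleGraph

lemma aux_pen {V : Type*} {G : SimpleGraph V} (hG : G.Connected) (v u : V) (k : ℕ)
    (h : G.dist v u = k + 1) : ∃ w, G.Adj w u ∧ G.dist v w = k := by
  obtain ⟨p, hp⟩ := (hG v u).exists_walk_length_eq_dist
  have hne : u ≠ v := by
    rintro rfl
    simp [SimpleGraph.dist_self] at h
  obtain ⟨w, hadj, q, hq⟩ := Walk.exists_eq_cons_of_ne hne p.reverse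
  have hlen : q.length = k := by
    have := congrArg Walk.length hq
    simp [hp, h] at this
    omega
  have h1 : G.dist v w ≤ k := by
    have := SimpleGraph.dist_le q.reverse
    simpa [hlen] using this
  have hwu : G.dist w u = 1 := SimpleGraph.dist_eq_one_iff_adj.mpr hadj.symm
  have h2 : G.dist v u ≤ G.dist v w + 1 := by
    calc G.dist v u ≤ G.dist v w + G.dist w u := hG.dist_triangle
    _ = G.dist v w + 1 := by rw [hwu]
  exact ⟨w, hadj.symm, by omega⟩

/-- If a single vertex `v` resolves a connected graph `G`, then `G` is a path
graph and `v` is one of its endpoints. -/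
theorem stmt14 {V : Type*} [Fintype V] (G : SimpleGraph V) (hG : G.Connected)
    (v : V) (hres : Function.Injective (G.dist v)) :
    ∃ (n : ℕ) (hn : 0 < n) (φ : G ≃g SimpleGraph.pathGraph n),
      φ v = ⟨0, hn⟩ ∨ ((φ v : ℕ) = n - 1) := by
  set n := Fintype.card V with hncard
  have hn : 0 < n := Fintype.card_pos_iff.mpr hG.nonempty
  have hlt : ∀ u, G.dist v u < n := by
    intro u
    obtain ⟨p, hp, hlen⟩ := hG.exists_path_of_dist v u
    calc G.dist v u = p.length := hlen.symm
    _ < n := hp.length_lt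
  let f : V → Fin n := fun u => ⟨G.dist v u, hlt u⟩
  have hfinj : Function.Injective f := by
    intro a b hab
    exact hres (by simpa [f, Fin.ext_iff] using hab)
  have hfbij : Function.Bijective f :=
    (Fintype.bijective_iff_injective_and_card f).mpr ⟨hfinj, by simp [hncard]⟩
  let e := Equiv.ofBijective f hfbij
  have hiff : ∀ a b : V, G.Adj a b ↔
      (G.dist v a + 1 = G.dist v b ∨ G.dist v b + 1 = G.dist v a) := by
    intro a b
    constructor
    · intro hab
      have hne : G.dist v a ≠ G.dist v b := fun hh => hab.ne (hres hh)
      have h1 : G.dist v b ≤ G.dist v a + 1 := by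
        calc G.dist v b ≤ G.dist v a + G.dist a b := hG.dist_triangle
        _ = G.dist v a + 1 := by rw [SimpleGraph.dist_eq_one_iff_adj.mpr hab]
      have h2 : G.dist v a ≤ G.dist v b + 1 := by
        calc G.dist v a ≤ G.dist v b + G.dist b a := hG.dist_triangle
        _ = G.dist v b + 1 := by rw [SimpleGraph.dist_eq_one_iff_adj.mpr hab.symm]
      omega
    · rintro (hh | hh)
      · obtain ⟨w, hadj, hw⟩ := aux_pen hG v b (G.dist v a) hh.symm
        have : w = a := hres hw
        exact this ▸ hadj
      · obtain ⟨w, hadj, hw⟩ := aux_pen hG v a (G.dist v b) hh.symm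
        exact ((hres hw) ▸ hadj).symm
  refine ⟨n, hn, ⟨e, ?_⟩, Or.inl ?_⟩
  · intro a b
    rw [SimpleGraph.pathGraph_adj]
    show ((f a : ℕ) + 1 = (f b : ℕ) ∨ (f b : ℕ) + 1 = (f a : ℕ)) ↔ G.Adj a b
    simp only [f]
    exact (hiff a b).symm
  · show f v = ⟨0, hn⟩
    simp [f, Fin.ext_iff]
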